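/- Let V ⊆ (0,∞) be a nonempty open interval and f : (0,∞) → ℝ Lebesgue-measurable. Suppose sup{ |f(qx)| : q ∈ ℚ, q > 0 } < ∞ for each x ∈ V. Then f is essentially bounded at infinity: there exist M and n₀ such that for all n ≥ n₀, the essential supremum of |f| on (n,∞) is at most M. -/

import Mathlib

open MeasureTheory Filter Set Topology
open scoped Pointwise

private lemma density_bound {S : Set ℝ} {x₀ : ℝ}
    (hx : Tendsto (fun r => volume (S ∩ Metric.closedBall x₀ r) / volume (Metric.closedBall x₀ r))
      (𝓝[>] 0) (𝓝 1)) :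
    ∃ r₀ > 0, ∀ r : ℝ, 0 < r → r ≤ r₀ →
      ENNReal.ofReal (3/2 * r) < volume (S ∩ Icc (x₀ - r) (x₀ + r)) := by
  have hlt : (ENNReal.ofReal (3/4)) < 1 := by
    rw [← ENNReal.ofReal_one]
    exact ENNReal.ofReal_lt_ofReal_iff_of_nonneg (by norm_num) |>.mpr (by norm_num)
  have h34 := hx.eventually (eventually_gt_nhds hlt)
  obtain ⟨u, hu, hsub⟩ := mem_nhdsGT_iff_exists_Ioc_subset.mp h34
  refine ⟨u, hu, fun r hr hru => ?_⟩
  have h := hsub ⟨hr, hru⟩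
  simp only [Set.mem_setOf_eq] at h
  have hcb : Metric.closedBall x₀ r = Icc (x₀ - r) (x₀ + r) := Real.closedBall_eq_Icc
  have hvol : volume (Metric.closedBall x₀ r) = ENNReal.ofReal (2 * r) := by
    rw [hcb, Real.volume_Icc]; ring_nf
  have h2 : ENNReal.ofReal (3/4) * volume (Metric.closedBall x₀ r)
      < volume (S ∩ Metric.closedBall x₀ r) := by
    refine (ENNReal.lt_div_iff_mul_lt ?_ ?_).mp h
    · left; rw [hvol]; exact (ENNReal.ofReal_pos.mpr (by linarith : (0:ℝ) < 2*r)).ne'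
    · left; rw [hvol]; exact ENNReal.ofReal_ne_top
  rw [hvol, ← ENNReal.ofReal_mul (by norm_num)] at h2
  rw [hcb] at h2
  convert h2 using 2
  ring

private lemma key_lemma {E B : Set ℝ} (hE : MeasurableSet E) (hB : MeasurableSet B)
    (hE0 : E ⊆ Ioi 0) (hB0 : B ⊆ Ioi 0)
    (hEpos : 0 < volume E) (hBpos : 0 < volume B) :
    ∃ q : ℚ, 0 < q ∧ ∃ x ∈ E, (q : ℝ) * x ∈ B := by
  have hEd := Besicovitch.ae_tendsto_measure_inter_div_of_measurableSet volume hE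
  have hBd := Besicovitch.ae_tendsto_measure_inter_div_of_measurableSet volume hB
  have hex : ∀ {S : Set ℝ}, MeasurableSet S → 0 < volume S →
      (∀ᵐ x, Tendsto (fun r => volume (S ∩ Metric.closedBall x r) / volume (Metric.closedBall x r))
        (𝓝[>] 0) (𝓝 (S.indicator 1 x))) →
      ∃ x₀, x₀ ∈ S ∧ Tendsto (fun r => volume (S ∩ Metric.closedBall x₀ r) /
        volume (Metric.closedBall x₀ r)) (𝓝[>] 0) (𝓝 1) := by
    intro S hS hSpos had
    by_contra hcon
    push_neg at hcon
    have hsub : S ⊆ {x | ¬ Tendsto (fun r => volume (S ∩ Metric.closedBall x r) /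
        volume (Metric.closedBall x r)) (𝓝[>] 0) (𝓝 (S.indicator 1 x))} := by
      intro x hxS
      simp only [Set.mem_setOf_eq]
      intro htd
      rw [Set.indicator_of_mem hxS] at htd
      exact hcon x hxS htd
    have : volume S = 0 := measure_mono_null hsub (by rw [← ae_iff] at *; exact had)
    exact absurd this (ne_of_gt hSpos)
  obtain ⟨x₀, hx₀E, hx₀⟩ := hex hE hEpos hEd
  obtain ⟨t₀, ht₀B, ht₀⟩ := hex hB hBpos hBd
  obtain ⟨r₀, hr₀, hEr⟩ := density_bound hx₀
  obtain ⟨r₁, hr₁, hBr⟩ := density_bound ht₀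
  have hx₀pos : 0 < x₀ := hE0 hx₀E
  have ht₀pos : 0 < t₀ := hB0 ht₀B
  set r : ℝ := min r₀ (r₁ * x₀ / t₀) with hr_def
  have hrpos : 0 < r := lt_min hr₀ (by positivity)
  have hrr₀ : r ≤ r₀ := min_le_left _ _
  have hrr₁ : r ≤ r₁ * x₀ / t₀ := min_le_right _ _
  set η : ℝ := min (t₀ / (2 * x₀)) (r * t₀ / (16 * x₀ ^ 2)) with hη_def
  have hηpos : 0 < η := lt_min (by positivity) (by positivity)
  have hη1 : η ≤ t₀ / (2 * x₀) := min_le_left _ _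
  have hη2 : η ≤ r * t₀ / (16 * x₀ ^ 2) := min_le_right _ _
  obtain ⟨q, hq1, hq2⟩ := exists_rat_btwn (show t₀ / x₀ - η < t₀ / x₀ by linarith)
  have h1 : t₀ / x₀ - t₀ / (2 * x₀) = t₀ / (2 * x₀) := by field_simp; ring
  have h2x : (0:ℝ) < t₀ / (2 * x₀) := by positivity
  have hq0 : 0 < (q : ℝ) := by linarith
  have h2q : t₀ / x₀ ≤ 2 * (q : ℝ) := by linarith
  set s : ℝ := (q : ℝ) * r with hs_def
  have hspos : 0 < s := by positivity
  have htx : t₀ / x₀ * x₀ = t₀ := by field_simp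
  have hq2x : (q : ℝ) * x₀ < t₀ := by nlinarith
  have hclose : t₀ - (q : ℝ) * x₀ ≤ s / 8 := by
    have hηx : η * x₀ ≤ r * t₀ / (16 * x₀) := by
      have e : r * t₀ / (16 * x₀ ^ 2) * x₀ = r * t₀ / (16 * x₀) := by
        field_simp
      nlinarith [mul_le_mul_of_nonneg_right hη2 hx₀pos.le]
    have e0 : (t₀ / x₀ - (q:ℝ)) * x₀ = t₀ - (q:ℝ) * x₀ := by rw [sub_mul, htx]
    have e1 : (t₀ / x₀ - (q:ℝ)) * x₀ ≤ η * x₀ :=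
      mul_le_mul_of_nonneg_right (by linarith) hx₀pos.le
    have e2 : r * t₀ / (16 * x₀) = r / 16 * (t₀ / x₀) := by field_simp
    have e3 : r / 16 * (t₀ / x₀) ≤ r / 16 * (2 * (q:ℝ)) :=
      mul_le_mul_of_nonneg_left h2q (by positivity)
    have e4 : r / 16 * (2 * (q:ℝ)) = s / 8 := by rw [hs_def]; ring
    linarith
  have hsr₁ : s ≤ r₁ := by
    have heq : t₀ / x₀ * (r₁ * x₀ / t₀) = r₁ := by field_simp
    have e1 : (q:ℝ) * r ≤ t₀ / x₀ * r := mul_le_mul_of_nonneg_right hq2.le hrpos.le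
    have e2 : t₀ / x₀ * r ≤ t₀ / x₀ * (r₁ * x₀ / t₀) :=
      mul_le_mul_of_nonneg_left hrr₁ (by positivity)
    linarith
  have hEI := hEr r hrpos hrr₀
  have hBJ := hBr s hspos hsr₁
  set I : Set ℝ := Icc (x₀ - r) (x₀ + r) with hI_def
  set J : Set ℝ := Icc (t₀ - s) (t₀ + s) with hJ_def
  set K : Set ℝ := Icc (t₀ - 9/8 * s) (t₀ + s) with hK_def
  set A' : Set ℝ := ((q : ℝ) • (E ∩ I) : Set ℝ) with hA'_def
  have hA'eq : A' = (fun y => ((q : ℝ))⁻¹ * y) ⁻¹' (E ∩ I) := by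
    ext y
    rw [hA'_def, mem_smul_set_iff_inv_smul_mem₀ (ne_of_gt hq0)]
    simp [smul_eq_mul]
  have hA'meas : MeasurableSet A' := by
    rw [hA'eq]
    exact (hE.inter measurableSet_Icc).preimage (measurable_const_mul _)
  have hA'vol : volume A' = ENNReal.ofReal (q : ℝ) * volume (E ∩ I) := by
    rw [hA'_def, Measure.addHaar_smul]
    congr 2
    rw [Module.finrank_self, pow_one, abs_of_pos hq0]
  have hA'lb : ENNReal.ofReal (3/2 * s) < volume A' := by
    rw [hA'vol]
    have : ENNReal.ofReal (3/2 * s) = ENNReal.ofReal (q : ℝ) * ENNReal.ofReal (3/2 * r) := by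
      rw [← ENNReal.ofReal_mul hq0.le]; congr 1; rw [hs_def]; ring
    rw [this]
    exact ENNReal.mul_lt_mul_right (ENNReal.ofReal_pos.mpr hq0).ne'
      ENNReal.ofReal_ne_top hEI
  have hA'K : A' ⊆ K := by
    rintro y ⟨x, ⟨_, hx1, hx2⟩, rfl⟩
    simp only [smul_eq_mul]
    constructor
    · nlinarith
    · nlinarith
  have hBK : B ∩ J ⊆ K := inter_subset_right.trans (Icc_subset_Icc (by linarith) le_rfl)
  have hKvol : volume K = ENNReal.ofReal (17/8 * s) := by
    rw [hK_def, Real.volume_Icc]; ring_nf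
  have hnd : ¬ Disjoint A' (B ∩ J) := by
    intro hdis
    have hun : volume (A' ∪ (B ∩ J)) = volume A' + volume (B ∩ J) := measure_union hdis (hB.inter measurableSet_Icc)
    have hle : volume (A' ∪ (B ∩ J)) ≤ volume K :=
      measure_mono (union_subset hA'K hBK)
    have hcontra : ENNReal.ofReal (3 * s) ≤ ENNReal.ofReal (17/8 * s) := by
      calc ENNReal.ofReal (3 * s) = ENNReal.ofReal (3/2 * s) + ENNReal.ofReal (3/2 * s) := by
            rw [← ENNReal.ofReal_add (by positivity) (by positivity)]; ring_nf
        _ ≤ volume A' + volume (B ∩ J) := add_le_add hA'lb.le hBJ.le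
        _ = volume (A' ∪ (B ∩ J)) := hun.symm
        _ ≤ volume K := hle
        _ = ENNReal.ofReal (17/8 * s) := hKvol
    have := (ENNReal.ofReal_le_ofReal_iff (by positivity)).mp hcontra
    linarith
  obtain ⟨y, hyA, hyBJ⟩ := Set.not_disjoint_iff.mp hnd
  obtain ⟨x, ⟨hxE, _⟩, hxy⟩ := hyA
  refine ⟨q, by exact_mod_cast hq0, x, hxE, ?_⟩
  simp only [smul_eq_mul] at hxy
  rw [hxy]
  exact hyBJ.1

theorem stmt_15 (f : ℝ → ℝ) (hf : Measurable f)
    (a b : ℝ) (ha : 0 < a) (hab : a < b)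
    (hbd : ∀ x ∈ Ioo a b, ∃ C : ℝ, ∀ q : ℚ, 0 < q → |f ((q : ℝ) * x)| ≤ C) :
    ∃ (M : ℝ) (n₀ : ℕ), ∀ n : ℕ, n₀ ≤ n →
      ∀ᵐ t ∂(volume.restrict (Ioi (n : ℝ))), |f t| ≤ M := by
  set g : ℕ → Set ℝ := fun N => {x ∈ Ioo a b | ∀ q : ℚ, 0 < q → |f ((q : ℝ) * x)| ≤ N}
    with hg_def
  have hgm : ∀ N, MeasurableSet (g N) := by
    intro N
    have : g N = Ioo a b ∩ ⋂ q : ℚ, ⋂ _ : 0 < q, {x | |f ((q : ℝ) * x)| ≤ N} := by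
      ext x
      simp only [hg_def, mem_sep_iff, mem_inter_iff, mem_iInter, mem_setOf_eq]
    rw [this]
    exact measurableSet_Ioo.inter (MeasurableSet.iInter fun q => MeasurableSet.iInter fun _ =>
      measurableSet_le ((hf.comp (measurable_const_mul _)).abs) measurable_const)
  have hcover : Ioo a b ⊆ ⋃ N : ℕ, g N := by
    intro x hx
    obtain ⟨C, hC⟩ := hbd x hx
    exact mem_iUnion.mpr ⟨⌈C⌉₊, hx, fun q hq => (hC q hq).trans (Nat.le_ceil C)⟩
  obtain ⟨N, hN⟩ : ∃ N, 0 < volume (g N) := by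
    by_contra h
    push_neg at h
    simp only [le_zero_iff] at h
    have h0 : volume (⋃ N : ℕ, g N) = 0 := measure_iUnion_null h
    have : volume (Ioo a b) = 0 := measure_mono_null hcover h0
    rw [Real.volume_Ioo] at this
    exact absurd this (ne_of_gt (ENNReal.ofReal_pos.mpr (by linarith)))
  set Bset : Set ℝ := {t | t ∈ Ioi (0:ℝ) ∧ (N : ℝ) < |f t|} with hBset_def
  have hBm : MeasurableSet Bset := by
    have : Bset = Ioi 0 ∩ {t | (N : ℝ) < |f t|} := rfl
    rw [this]
    exact measurableSet_Ioi.inter (measurableSet_lt measurable_const hf.abs)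
  have hB0vol : volume Bset = 0 := by
    by_contra h
    have hpos : 0 < volume Bset := pos_iff_ne_zero.mpr h
    have hgsub : g N ⊆ Ioi 0 := fun x hx => lt_trans ha hx.1.1
    obtain ⟨q, hq, x, hxE, hqx⟩ := key_lemma (hgm N) hBm hgsub (fun t ht => ht.1) hN hpos
    have h1 : |f ((q:ℝ) * x)| ≤ N := hxE.2 q hq
    have h2 : (N : ℝ) < |f ((q:ℝ) * x)| := hqx.2
    linarith
  refine ⟨N, 0, fun n _ => ?_⟩
  have hae : ∀ᵐ t, t ∉ Bset := by
    rw [ae_iff]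
    simpa using hB0vol
  rw [ae_restrict_iff' measurableSet_Ioi]
  filter_upwards [hae] with t ht hti
  by_contra hcon
  push_neg at hcon
  exact ht ⟨mem_Ioi.mpr (lt_of_le_of_lt (Nat.cast_nonneg n) (mem_Ioi.mp hti)), hcon⟩
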